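/- One has ψ'(ξ) > 0 for all ξ ∈ (0,1); consequently ψ is strictly increasing on (0,1], so its minimum is attained at the pore centre, and ψ(ξ) > 3·log 2 + 2·log λ − log((β+4)/β) for every ξ ∈ (0,1]. -/

import Mathlib

open Real Set Filter

/-- The paper's large-β approximate profile
`ψ(ξ) = 2 log(cosech(arcoth((β+2)/2) - log ξ)) - log(ξ²/(2λ²))`,
written with `a = (1/2)·log((β+4)/β) = arcoth((β+2)/2)`. -/
noncomputable def psiL (lam β ξ : ℝ) : ℝ :=
  -2 * Real.log (Real.sinh ((1/2) * Real.log ((β + 4) / β) - Real.log ξ)) +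
    Real.log (2 * lam ^ 2) - 2 * Real.log ξ

/-- `ψ' > 0` on `(0,1)`, so `ψ` is strictly increasing on `(0,1]`: its minimum
is attained at the pore centre, and `ψ(ξ)` exceeds the central value
`3 log 2 + 2 log λ - log((β+4)/β)` for every `ξ ∈ (0,1]`. -/
theorem stmt_3 (lam β : ℝ) (hlam : 0 < lam) (hβ : 0 < β) :
    (∀ ξ ∈ Set.Ioo (0:ℝ) 1, 0 < deriv (psiL lam β) ξ) ∧
    StrictMonoOn (psiL lam β) (Set.Ioc (0:ℝ) 1) ∧
    (∀ ξ ∈ Set.Ioc (0:ℝ) 1,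
      psiL lam β ξ >
        3 * Real.log 2 + 2 * Real.log lam - Real.log ((β + 4) / β)) := by
  set L := 3 * Real.log 2 + 2 * Real.log lam - Real.log ((β + 4) / β) with hLdef
  set c := β / (β + 4) with hcdef
  have hβ4 : (0:ℝ) < β + 4 := by linarith
  have hc0 : 0 < c := div_pos hβ hβ4
  have hc1 : c < 1 := (div_lt_one hβ4).mpr (by linarith)
  have hinv : (β + 4) / β = c⁻¹ := by rw [hcdef, inv_div]
  set a := (1/2) * Real.log ((β + 4) / β) with hadef
  have h2a : 2 * a = Real.log ((β + 4) / β) := by rw [hadef]; ring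
  have hexp2a : Real.exp a ^ 2 = c⁻¹ := by
    rw [← Real.exp_nat_mul]
    push_cast
    rw [show (2:ℝ) * a = Real.log ((β+4)/β) from h2a, Real.exp_log (by positivity), hinv]
  -- key identity
  have key : ∀ ξ : ℝ, 0 < ξ → c * ξ ^ 2 < 1 →
      psiL lam β ξ = L - 2 * Real.log (1 - c * ξ ^ 2) := by
    intro ξ hξ hcξ
    have h1 : 0 < 1 - c * ξ ^ 2 := by linarith
    have hA0 : Real.exp a ≠ 0 := (Real.exp_pos a).ne'
    have hsinh : Real.sinh (a - Real.log ξ) = Real.exp a * (1 - c * ξ ^ 2) / (2 * ξ) := by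
      rw [Real.sinh_eq]
      have e1 : Real.exp (a - Real.log ξ) = Real.exp a / ξ := by
        rw [Real.exp_sub, Real.exp_log hξ]
      have e2 : Real.exp (-(a - Real.log ξ)) = ξ / Real.exp a := by
        rw [neg_sub, Real.exp_sub, Real.exp_log hξ]
      rw [e1, e2]
      have hAc : c * Real.exp a ^ 2 = 1 := by
        rw [hexp2a]; field_simp
      field_simp
      linear_combination (ξ^2) * hAc
    show -2 * Real.log (Real.sinh (a - Real.log ξ)) + Real.log (2 * lam ^ 2) - 2 * Real.log ξ
        = L - 2 * Real.log (1 - c * ξ ^ 2)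
    rw [hsinh, Real.log_div (by positivity) (by positivity),
      Real.log_mul hA0 h1.ne', Real.log_exp,
      Real.log_mul two_ne_zero hξ.ne',
      Real.log_mul two_ne_zero (pow_ne_zero 2 hlam.ne'), Real.log_pow]
    rw [hLdef]
    push_cast
    linarith [h2a]
  have hIoc : ∀ ξ : ℝ, ξ ∈ Set.Ioc (0:ℝ) 1 → c * ξ ^ 2 < 1 := by
    intro ξ hξ
    have hsq : ξ ^ 2 ≤ 1 := by nlinarith [hξ.1, hξ.2]
    nlinarith [hsq, hc0, hc1]
  have hIoo : ∀ ξ : ℝ, ξ ∈ Set.Ioo (0:ℝ) 1 → c * ξ ^ 2 < 1 := by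
    intro ξ hξ
    exact hIoc ξ ⟨hξ.1, hξ.2.le⟩
  -- derivative
  have hgderiv : ∀ ξ ∈ Set.Ioo (0:ℝ) 1,
      HasDerivAt (fun x => L - 2 * Real.log (1 - c * x ^ 2))
        (4 * c * ξ / (1 - c * ξ ^ 2)) ξ := by
    intro ξ hξ
    have h1 : 0 < 1 - c * ξ ^ 2 := by linarith [hIoo ξ hξ]
    have hu : HasDerivAt (fun x : ℝ => 1 - c * x ^ 2) (-(c * (2 * ξ))) ξ := by
      have := ((hasDerivAt_pow 2 ξ).const_mul c).const_sub 1
      simpa using this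
    have hlog := hu.log h1.ne'
    have := (hlog.const_mul 2).const_sub L
    rw [show 4 * c * ξ / (1 - c * ξ ^ 2) = -(2 * (-(c * (2 * ξ)) / (1 - c * ξ ^ 2))) by ring]
    exact this
  have hder : ∀ ξ ∈ Set.Ioo (0:ℝ) 1,
      deriv (psiL lam β) ξ = 4 * c * ξ / (1 - c * ξ ^ 2) := by
    intro ξ hξ
    have heq : psiL lam β =ᶠ[nhds ξ] (fun x => L - 2 * Real.log (1 - c * x ^ 2)) := by
      filter_upwards [isOpen_Ioo.mem_nhds hξ] with x hx
      exact key x hx.1 (hIoo x hx)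
    rw [heq.deriv_eq, (hgderiv ξ hξ).deriv]
  have hpos : ∀ ξ ∈ Set.Ioo (0:ℝ) 1, 0 < deriv (psiL lam β) ξ := by
    intro ξ hξ
    rw [hder ξ hξ]
    have h1 : 0 < 1 - c * ξ ^ 2 := by linarith [hIoo ξ hξ]
    exact div_pos (by nlinarith [hξ.1]) h1
  refine ⟨hpos, ?_, ?_⟩
  · apply strictMonoOn_of_deriv_pos (convex_Ioc 0 1)
    · have hgcont : ContinuousOn (fun x : ℝ => L - 2 * Real.log (1 - c * x ^ 2))
          (Set.Ioc (0:ℝ) 1) := by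
        apply continuousOn_const.sub
        apply continuousOn_const.mul
        apply ContinuousOn.log
        · fun_prop
        · intro x hx
          have := hIoc x hx
          linarith
      exact hgcont.congr fun x hx => key x hx.1 (hIoc x hx)
    · intro ξ hξ
      rw [interior_Ioc] at hξ
      exact hpos ξ hξ
  · intro ξ hξ
    have h1 : 0 < 1 - c * ξ ^ 2 := by linarith [hIoc ξ hξ]
    have hlt : 1 - c * ξ ^ 2 < 1 := by
      have := mul_pos hc0 (pow_pos hξ.1 2)
      linarith
    have := Real.log_neg h1 hlt
    have hk := key ξ hξ.1 (hIoc ξ hξ)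
    rw [hk]
    rw [hLdef]
    linarith
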